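/- arXiv:1701.01144 — 3 statements merged into one kernel-verified Lean document; each statement's English description precedes it below -/
import Mathlib

section
/- Let F be a filter on the power set of Ω with ⋂_{G ∈ F} G = ∅, and let 𝔡 : F → ℝ₊ ∪ {+∞} be an increasing function with inf 𝔡(F) > 0. Then D(x,y) := 0 if x = y, and D(x,y) := inf{𝔡(G) : G ∈ F, {x,y} ∩ G = ∅} otherwise, is an ultrametric on Ω. -/
open scoped ENNReal

/-- From a filter `F` with empty intersection and an increasing function
`𝔡 : F → (0, +∞]` bounded below away from `0`, the formula
`D(x,y) = inf {𝔡 G : G ∈ F, {x,y} ∩ G = ∅}` (and `D(x,x) = 0`) defines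
an ultrametric on `Ω`. -/
theorem filter_to_ultrametric
    {Ω : Type*} [DecidableEq Ω] (F : Set (Set Ω))
    (hne : F.Nonempty)
    (hdir : ∀ A ∈ F, ∀ B ∈ F, ∃ C ∈ F, C ⊆ A ∧ C ⊆ B)
    (hup : ∀ A ∈ F, ∀ B : Set Ω, A ⊆ B → B ∈ F)
    (hint : ⋂ G ∈ F, G = (∅ : Set Ω))
    (𝔡 : Set Ω → ℝ≥0∞)
    (hinc : ∀ A ∈ F, ∀ B ∈ F, A ⊆ B → 𝔡 A ≤ 𝔡 B)
    (hbelow : 0 < ⨅ G ∈ F, 𝔡 G) :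
    let D : Ω → Ω → ℝ≥0∞ := fun x y =>
      if x = y then 0 else sInf {r | ∃ G ∈ F, x ∉ G ∧ y ∉ G ∧ r = 𝔡 G}
    (∀ x y, D x y = D y x) ∧
    (∀ x y, x ≠ y → 0 < D x y) ∧
    (∀ x y z, D x z ≤ max (D x y) (D y z)) := by
  intro D
  refine ⟨?_, ?_, ?_⟩
  · intro x y
    by_cases h : x = y
    · simp [D, h]
    · have hset : {r | ∃ G ∈ F, x ∉ G ∧ y ∉ G ∧ r = 𝔡 G}
          = {r | ∃ G ∈ F, y ∉ G ∧ x ∉ G ∧ r = 𝔡 G} := by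
        ext r
        constructor <;> rintro ⟨G, hG, hx, hy, hr⟩ <;> exact ⟨G, hG, hy, hx, hr⟩
      simp only [D, if_neg h, if_neg (Ne.symm h), hset]
  · intro x y hxy
    have hle : (⨅ G ∈ F, 𝔡 G) ≤ D x y := by
      simp only [D, if_neg hxy]
      apply le_sInf
      rintro r ⟨G, hG, -, -, rfl⟩
      exact iInf₂_le G hG
    exact lt_of_lt_of_le hbelow hle
  · intro x y z
    by_cases hxz : x = z
    · simp [D, hxz]
    by_cases hxy : x = y
    · subst hxy; exact le_max_right _ _
    by_cases hyz : y = z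
    · subst hyz; exact le_max_left _ _
    simp only [D, if_neg hxz, if_neg hxy, if_neg hyz]
    by_contra hc
    push_neg at hc
    have hA : sInf {r | ∃ G ∈ F, x ∉ G ∧ y ∉ G ∧ r = 𝔡 G}
        < sInf {r | ∃ G ∈ F, x ∉ G ∧ z ∉ G ∧ r = 𝔡 G} :=
      lt_of_le_of_lt (le_max_left _ _) hc
    have hB : sInf {r | ∃ G ∈ F, y ∉ G ∧ z ∉ G ∧ r = 𝔡 G}
        < sInf {r | ∃ G ∈ F, x ∉ G ∧ z ∉ G ∧ r = 𝔡 G} :=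
      lt_of_le_of_lt (le_max_right _ _) hc
    obtain ⟨a, ⟨G₁, hG₁, hx₁, hy₁, rfl⟩, ha⟩ := sInf_lt_iff.mp hA
    obtain ⟨b, ⟨G₂, hG₂, hy₂, hz₂, rfl⟩, hb⟩ := sInf_lt_iff.mp hB
    obtain ⟨C, hC, hC₁, hC₂⟩ := hdir G₁ hG₁ G₂ hG₂
    have hmem : 𝔡 C ∈ {r | ∃ G ∈ F, x ∉ G ∧ z ∉ G ∧ r = 𝔡 G} :=
      ⟨C, hC, fun h => hx₁ (hC₁ h), fun h => hz₂ (hC₂ h), rfl⟩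
    have : sInf {r | ∃ G ∈ F, x ∉ G ∧ z ∉ G ∧ r = 𝔡 G} ≤ 𝔡 C := sInf_le hmem
    have hle : 𝔡 C ≤ max (𝔡 G₁) (𝔡 G₂) :=
      le_trans (hinc C hC G₁ hG₁ hC₁) (le_max_left _ _)
    exact absurd (lt_of_le_of_lt (le_trans this hle) (max_lt ha hb)) (lt_irrefl _)
end

section
/- Let d be an ultrametric on Ω, let F_d be the filter of complements of sets contained in closed ultrametric balls, and define 𝔡_d(F) := sup{d(x,y) : x, y ∉ F}. Then the ultrametric D reconstructed from F_d and 𝔡_d via D(x,y) = inf{𝔡_d(G) : G ∈ F_d, {x,y} ∩ G = ∅} (for x ≠ y) coincides with d. -/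
open scoped ENNReal

/-- Reconstruction of an ultrametric from its ball filter: with
`I_d` the ideal of subsets of closed balls of attained radius, `F_d` the filter of
their complements, and `𝔡_d F = sup {d u v : u, v ∉ F}`, the formula
`D(x,y) = inf {𝔡_d G : G ∈ F_d, {x,y} ∩ G = ∅}` recovers `d(x,y)` for `x ≠ y`. -/
theorem ultrametric_reconstruction_from_filter
    {Ω : Type*} (d : Ω → Ω → ℝ≥0∞)
    (hrefl : ∀ x y, d x y = 0 ↔ x = y)
    (hsymm : ∀ x y, d x y = d y x)
    (hultra : ∀ x y z, d x y ≤ max (d x z) (d z y)) :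
    let Id : Set (Set Ω) := {T | ∃ x₀ u, T ⊆ {z | d z x₀ ≤ d x₀ u}}
    let Fd : Set (Set Ω) := {G | Gᶜ ∈ Id}
    let 𝔡d : Set Ω → ℝ≥0∞ := fun G => sSup {r | ∃ u v, u ∉ G ∧ v ∉ G ∧ r = d u v}
    ∀ x y : Ω, x ≠ y →
      sInf {r | ∃ G ∈ Fd, x ∉ G ∧ y ∉ G ∧ r = 𝔡d G} = d x y := by
  intro Id Fd 𝔡d x y _
  apply le_antisymm
  · -- upper bound: take G := complement of the ball of radius d x y around x
    set B : Set Ω := {z | d z x ≤ d x y} with hB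
    have hGF : Bᶜ ∈ Fd := by
      refine ⟨x, y, ?_⟩
      simp [hB]
    have hx : x ∉ Bᶜ := by
      simp [hB, (hrefl x x).mpr rfl]
    have hy : y ∉ Bᶜ := by simp [hB, (hsymm y x).le]
    refine le_trans (sInf_le ⟨Bᶜ, hGF, hx, hy, rfl⟩) ?_
    refine sSup_le ?_
    rintro r ⟨u, v, hu, hv, rfl⟩
    simp only [Set.mem_compl_iff, not_not, hB, Set.mem_setOf_eq] at hu hv
    calc d u v ≤ max (d u x) (d x v) := hultra u v x
      _ ≤ d x y := by
          apply max_le hu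
          rw [hsymm x v]; exact hv
  · -- lower bound: every admissible G has diameter ≥ d x y
    refine le_sInf ?_
    rintro r ⟨G, _, hx, hy, rfl⟩
    exact le_sSup ⟨x, y, hx, hy, rfl⟩
end

section
/- Let f₁, …, f_N : D → ℝ be functions, Z(k, x) := Σ_α exp(f_α(x)/k) and F(k, x) := −k·ln Z(k, x) (with the convention that f_α here play the role of −F_α/T). Assume the minimum value κ₀(x) := min_α(−f_α(x)) is attained by exactly λ₀(x) indices. Then F extends continuously to k = 0 with F(0, x) = κ₀(x), its first derivative in k at k = 0 equals −ln λ₀(x), and all higher-order derivatives ∂ₖᵐ F at k = 0⁺ vanish for m ≥ 2. -/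
open Filter Topology Real

namespace TropAux

inductive Flat : (ℝ → ℝ) → Prop
  | base (b c : ℝ) (m : ℤ) (hc : 0 < c) : Flat (fun k => b * Real.exp (-c / k) * k ^ m)
  | zero : Flat (fun _ => 0)
  | add {φ ψ} (hφ : Flat φ) (hψ : Flat ψ) : Flat (fun k => φ k + ψ k)
  | congr {φ ψ} (hφ : Flat φ) (h : ∀ k ∈ Set.Ioi (0:ℝ), φ k = ψ k) : Flat ψ

theorem Flat.const_mul {φ} (hφ : Flat φ) (a : ℝ) : Flat (fun k => a * φ k) := by
  induction hφ with
  | base b c m hc => exact Flat.congr (Flat.base (a*b) c m hc) (fun k _ => by ring)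
  | zero => exact Flat.congr Flat.zero (fun k _ => by ring)
  | add hφ hψ ihφ ihψ => exact Flat.congr (ihφ.add ihψ) (fun k _ => by ring)
  | congr hφ h ih => exact Flat.congr ih (fun k hk => by rw [h k hk])

theorem Flat.mul {φ ψ} (hφ : Flat φ) (hψ : Flat ψ) : Flat (fun k => φ k * ψ k) := by
  induction hφ generalizing ψ with
  | base b c m hc =>
    induction hψ with
    | base b' c' m' hc' =>
      refine Flat.congr (Flat.base (b*b') (c+c') (m+m') (by linarith)) (fun k hk => ?_)
      have hk0 : k ≠ 0 := (ne_of_gt hk)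
      rw [zpow_add₀ hk0, neg_add, add_div, Real.exp_add]
      ring
    | zero => exact Flat.congr Flat.zero (fun k _ => by ring)
    | add h1 h2 ih1 ih2 => exact Flat.congr (ih1.add ih2) (fun k _ => by ring)
    | congr h1 h ih => exact Flat.congr ih (fun k hk => by rw [h k hk])
  | zero => exact Flat.congr Flat.zero (fun k _ => by ring)
  | add h1 h2 ih1 ih2 => exact Flat.congr ((ih1 hψ).add (ih2 hψ)) (fun k _ => by ring)
  | congr h1 h ih => exact Flat.congr (ih hψ) (fun k hk => by rw [h k hk])

theorem Flat.id_mul {φ} (hφ : Flat φ) : Flat (fun k => k * φ k) := by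
  induction hφ with
  | base b c m hc =>
    refine Flat.congr (Flat.base b c (m+1) hc) (fun k hk => ?_)
    rw [zpow_add₀ (ne_of_gt hk), zpow_one]; ring
  | zero => exact Flat.congr Flat.zero (fun k _ => by ring)
  | add h1 h2 ih1 ih2 => exact Flat.congr (ih1.add ih2) (fun k _ => by ring)
  | congr h1 h ih => exact Flat.congr ih (fun k hk => by rw [h k hk])

theorem Flat.sub {φ ψ} (hφ : Flat φ) (hψ : Flat ψ) : Flat (fun k => φ k - ψ k) :=
  Flat.congr (hφ.add (hψ.const_mul (-1))) (fun k _ => by ring)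

theorem Flat.sum {ι : Type*} (s : Finset ι) (φ : ι → ℝ → ℝ) (h : ∀ i ∈ s, Flat (φ i)) :
    Flat (fun k => ∑ i ∈ s, φ i k) := by
  classical
  induction s using Finset.induction_on with
  | empty => exact Flat.congr Flat.zero (fun k _ => by simp)
  | insert a s hni ih =>
    refine Flat.congr (Flat.add (h a (Finset.mem_insert_self a s))
      (ih (fun i hi => h i (Finset.mem_insert_of_mem hi)))) (fun k _ => ?_)
    rw [Finset.sum_insert hni]



theorem aux_tendsto (c : ℝ) (j : ℕ) (hc : 0 < c) :
    Tendsto (fun t : ℝ => t ^ j * Real.exp (-(c * t))) atTop (𝓝 0) := by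
  have h := (tendsto_pow_mul_exp_neg_atTop_nhds_zero j).comp
    (tendsto_id.const_mul_atTop hc)
  have h2 : Tendsto (fun t : ℝ => (c:ℝ)⁻¹ ^ j * ((c*t) ^ j * Real.exp (-(c * t)))) atTop
      (𝓝 ((c:ℝ)⁻¹ ^ j * 0)) := h.const_mul _
  rw [mul_zero] at h2
  refine h2.congr' (Eventually.of_forall fun t => ?_)
  rw [mul_pow, ← mul_assoc, ← mul_assoc, ← mul_pow, inv_mul_cancel₀ hc.ne', one_pow, one_mul]

theorem base_tendsto (b c : ℝ) (m : ℤ) (hc : 0 < c) :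
    Tendsto (fun k : ℝ => b * Real.exp (-c / k) * k ^ m) (𝓝[>] 0) (𝓝 0) := by
  set j : ℕ := m.natAbs with hj
  have hmj : -(j:ℤ) ≤ m := by omega
  -- the comparison function: exp(-c/k) * k^(-j) = (k⁻¹)^j * exp(-(c * k⁻¹))
  have hcomp : Tendsto (fun k : ℝ => (k⁻¹) ^ j * Real.exp (-(c * k⁻¹))) (𝓝[>] 0) (𝓝 0) :=
    (aux_tendsto c j hc).comp tendsto_inv_nhdsGT_zero
  have hbnd : ∀ᶠ k in 𝓝[>] (0:ℝ), ‖Real.exp (-c / k) * k ^ m‖ ≤ (k⁻¹) ^ j * Real.exp (-(c * k⁻¹)) := by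
    filter_upwards [Ioo_mem_nhdsGT (by norm_num : (0:ℝ) < 1)] with k hk
    obtain ⟨hk0, hk1⟩ := hk
    have hkpos : (0:ℝ) < k := hk0
    rw [Real.norm_eq_abs, abs_of_nonneg (by positivity)]
    have h1 : (k:ℝ) ^ m ≤ k ^ (-(j:ℤ)) := by
      exact zpow_le_zpow_right_of_le_one₀ hkpos (le_of_lt hk1) hmj
    have h2 : (k:ℝ) ^ (-(j:ℤ)) = (k⁻¹) ^ j := by
      rw [zpow_neg, ← zpow_natCast, ← inv_zpow, zpow_natCast]
    have h3 : Real.exp (-c / k) = Real.exp (-(c * k⁻¹)) := by rw [neg_div, div_eq_mul_inv]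
    calc Real.exp (-c / k) * k ^ m ≤ Real.exp (-c / k) * (k⁻¹) ^ j := by
          rw [← h2]; exact mul_le_mul_of_nonneg_left h1 (le_of_lt (Real.exp_pos _))
      _ = (k⁻¹) ^ j * Real.exp (-(c * k⁻¹)) := by rw [h3]; ring
  have h0 : Tendsto (fun k : ℝ => Real.exp (-c / k) * k ^ m) (𝓝[>] 0) (𝓝 0) :=
    squeeze_zero_norm' hbnd hcomp
  have := h0.const_mul b
  rw [mul_zero] at this
  exact this.congr (fun k => by ring)

theorem flat_hasDeriv_base (b c : ℝ) (m : ℤ) (hc : 0 < c) (k : ℝ) (hk : 0 < k) :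
    HasDerivAt (fun k : ℝ => b * Real.exp (-c / k) * k ^ m)
      ((b*c) * Real.exp (-c / k) * k ^ (m-2) + (b*(m:ℝ)) * Real.exp (-c / k) * k ^ (m-1)) k := by
  have hk0 : k ≠ 0 := ne_of_gt hk
  have hE : HasDerivAt (fun k : ℝ => Real.exp (-c / k)) (Real.exp (-c / k) * (c / k ^ 2)) k := by
    have h1 : HasDerivAt (fun k : ℝ => -c / k) (c / k ^ 2) k := by
      have h := (hasDerivAt_inv hk0).const_mul (-c)
      have hfe : (fun y:ℝ => -c * y⁻¹) = (fun y:ℝ => -c / y) := by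
        funext y; rw [div_eq_mul_inv]
      rw [hfe] at h
      exact h.congr_deriv (by ring)
    exact h1.exp
  have hP : HasDerivAt (fun k : ℝ => (k:ℝ) ^ m) ((m:ℝ) * k ^ (m-1)) k :=
    hasDerivAt_zpow m k (Or.inl hk0)
  have := (hE.const_mul b).mul hP
  refine HasDerivAt.congr_deriv this ?_
  have e2 : (k:ℝ) ^ (m-2) = k ^ m / (k*k) := by rw [zpow_sub₀ hk0, zpow_two]
  have e1 : (k:ℝ) ^ (m-1) = k ^ m / k := by rw [zpow_sub₀ hk0, zpow_one]
  rw [e1, e2]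
  field_simp


theorem Flat.tendsto {φ} (hφ : Flat φ) : Tendsto φ (𝓝[>] (0:ℝ)) (𝓝 0) := by
  induction hφ with
  | base b c m hc => exact base_tendsto b c m hc
  | zero => exact tendsto_const_nhds
  | add h1 h2 ih1 ih2 => simpa using ih1.add ih2
  | congr h1 h ih =>
    exact ih.congr' (eventuallyEq_of_mem self_mem_nhdsWithin h)

theorem Flat.hasDeriv {φ} (hφ : Flat φ) :
    ∃ ψ, Flat ψ ∧ ∀ k ∈ Set.Ioi (0:ℝ), HasDerivAt φ (ψ k) k := by
  induction hφ with
  | base b c m hc =>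
    exact ⟨fun k => (b*c) * Real.exp (-c / k) * k ^ (m-2) + (b*(m:ℝ)) * Real.exp (-c / k) * k ^ (m-1),
      (Flat.base (b*c) c (m-2) hc).add (Flat.base (b*(m:ℝ)) c (m-1) hc),
      fun k hk => flat_hasDeriv_base b c m hc k hk⟩
  | zero => exact ⟨fun _ => 0, Flat.zero, fun k _ => hasDerivAt_const k 0⟩
  | add h1 h2 ih1 ih2 =>
    obtain ⟨ψ1, hψ1, hd1⟩ := ih1
    obtain ⟨ψ2, hψ2, hd2⟩ := ih2
    exact ⟨fun k => ψ1 k + ψ2 k, hψ1.add hψ2, fun k hk => (hd1 k hk).add (hd2 k hk)⟩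
  | congr h1 h ih =>
    obtain ⟨ψ1, hψ1, hd1⟩ := ih
    refine ⟨ψ1, hψ1, fun k hk => (hd1 k hk).congr_of_eventuallyEq ?_⟩
    exact eventually_of_mem (isOpen_Ioi.mem_nhds hk) (fun y hy => (h y hy).symm)



theorem key (N : ℕ) (g : Fin N → ℝ) (M : ℝ) (hle : ∀ α, g α ≤ M) (hmem : ∃ α, g α = M) :
    Tendsto (fun k => -k * Real.log (∑ α : Fin N, Real.exp (g α / k))) (𝓝[>] (0:ℝ)) (𝓝 (-M)) ∧
    Tendsto (deriv (fun k => -k * Real.log (∑ α : Fin N, Real.exp (g α / k)))) (𝓝[>] (0:ℝ))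
      (𝓝 (-Real.log ((Finset.univ.filter fun α : Fin N => g α = M).card))) ∧
    (∀ m : ℕ, 2 ≤ m → Tendsto (iteratedDeriv m (fun k => -k * Real.log (∑ α : Fin N, Real.exp (g α / k))))
      (𝓝[>] (0:ℝ)) (𝓝 0)) := by
  classical
  obtain ⟨α₀, hα₀⟩ := hmem
  have hNE : Nonempty (Fin N) := ⟨α₀⟩
  set Fl : ℝ → ℝ := fun k => -k * Real.log (∑ α : Fin N, Real.exp (g α / k)) with hFl
  set A : Finset (Fin N) := Finset.univ.filter (fun α => g α = M) with hA
  set lam : ℕ := A.card with hlam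
  set S : ℝ → ℝ := fun k => ∑ α : Fin N, Real.exp ((g α - M) / k) with hSdef
  set T : ℝ → ℝ := fun k => ∑ α ∈ Aᶜ, Real.exp ((g α - M) / k) with hTdef
  set L : ℝ → ℝ := fun k => Real.log (S k) with hLdef
  have hlam_pos : 0 < lam := Finset.card_pos.mpr ⟨α₀, by simp [hA, hα₀]⟩
  have hlamR : (0:ℝ) < lam := by exact_mod_cast hlam_pos
  have hST : ∀ k, S k = lam + T k := by
    intro k
    have h1 : S k = (∑ α ∈ A, Real.exp ((g α - M) / k)) + ∑ α ∈ Aᶜ, Real.exp ((g α - M) / k) :=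
      (Finset.sum_add_sum_compl A _).symm
    have h2 : (∑ α ∈ A, Real.exp ((g α - M) / k)) = (lam:ℝ) := by
      have he : ∀ α ∈ A, Real.exp ((g α - M)/k) = 1 := by
        intro α hα
        have hgα : g α = M := by simpa [hA] using hα
        simp [hgα]
      rw [Finset.sum_congr rfl he, Finset.sum_const, nsmul_eq_mul, mul_one, hlam]
    rw [h1, h2, hTdef]
  have hSfun : S = fun k => (lam:ℝ) + T k := funext hST
  have hTflat : Flat T := by
    refine Flat.sum _ _ (fun α hα => ?_)
    have hne : ¬ g α = M := by simpa [hA] using (Finset.mem_compl.mp hα)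
    have hlt : g α < M := lt_of_le_of_ne (hle α) hne
    refine Flat.congr (Flat.base 1 (M - g α) 0 (by linarith)) (fun k _ => by simp [neg_sub])
  have hSpos : ∀ k, 0 < S k :=
    fun k => Finset.sum_pos (fun α _ => Real.exp_pos _) Finset.univ_nonempty
  have hSlim : Tendsto S (𝓝[>] (0:ℝ)) (𝓝 (lam:ℝ)) := by
    rw [hSfun]
    simpa using (tendsto_const_nhds.add hTflat.tendsto)
  obtain ⟨T', hT'flat, hT'd⟩ := hTflat.hasDeriv
  have hS'd : ∀ k ∈ Set.Ioi (0:ℝ), HasDerivAt S (T' k) k := by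
    intro k hk
    rw [hSfun]
    exact (hT'd k hk).const_add (lam:ℝ)
  have hLlim : Tendsto L (𝓝[>] (0:ℝ)) (𝓝 (Real.log lam)) :=
    (Real.continuousAt_log (ne_of_gt hlamR)).tendsto.comp hSlim
  -- multiplication by powers of S preserves flatness
  have hmulS : ∀ (i:ℕ) (φ : ℝ → ℝ), Flat φ → Flat (fun k => φ k * S k ^ i) := by
    intro i
    induction i with
    | zero => intro φ hφ; exact Flat.congr hφ (fun k _ => by simp)
    | succ i ih =>
      intro φ hφ
      have h1 : Flat (fun k => φ k * S k) := by
        refine Flat.congr ((hφ.const_mul (lam:ℝ)).add (hφ.mul hTflat)) (fun k _ => ?_)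
        rw [hST k]; ring
      exact Flat.congr (ih _ h1) (fun k _ => by rw [pow_succ]; ring)
  -- master lemma on derivatives of L
  have master : ∀ j : ℕ, ∃ P n, Flat P ∧ ∀ k ∈ Set.Ioi (0:ℝ),
      iteratedDeriv (j+1) L k = P k / S k ^ n ∧
      HasDerivAt (iteratedDeriv j L) (P k / S k ^ n) k := by
    intro j
    induction j with
    | zero =>
      refine ⟨T', 1, hT'flat, fun k hk => ?_⟩
      have hder : HasDerivAt L (T' k / S k ^ 1) k := by
        rw [pow_one]
        exact (hS'd k hk).log (ne_of_gt (hSpos k))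
      refine ⟨?_, ?_⟩
      · rw [iteratedDeriv_one]
        exact hder.deriv
      · rw [iteratedDeriv_zero]
        exact hder
    | succ j ih =>
      obtain ⟨P, n, hPflat, hP⟩ := ih
      obtain ⟨P', hP'flat, hP'd⟩ := hPflat.hasDeriv
      refine ⟨fun k => P' k * S k ^ n - ((n:ℝ) * ((T' k * P k) * S k ^ (n-1))), n + n,
        (hmulS n P' hP'flat).sub ((hmulS (n-1) _ (hT'flat.mul hPflat)).const_mul (n:ℝ)),
        fun k hk => ?_⟩
      have hd : HasDerivAt (fun k => P k / S k ^ n)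
          ((P' k * S k ^ n - P k * ((n:ℝ) * S k ^ (n-1) * T' k)) / (S k ^ n)^2) k :=
        (hP'd k hk).div ((hS'd k hk).pow n) (pow_ne_zero n (ne_of_gt (hSpos k)))
      have hval : (P' k * S k ^ n - P k * ((n:ℝ) * S k ^ (n-1) * T' k)) / (S k ^ n)^2
          = (P' k * S k ^ n - ((n:ℝ) * ((T' k * P k) * S k ^ (n-1)))) / S k ^ (n+n) := by
        congr 1
        · ring
        · rw [← pow_mul, mul_two]
      rw [hval] at hd
      have heq : iteratedDeriv (j+1) L =ᶠ[𝓝 k] fun k => P k / S k ^ n :=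
        eventually_of_mem (isOpen_Ioi.mem_nhds hk) (fun y hy => (hP y hy).1)
      have hd2 : HasDerivAt (iteratedDeriv (j+1) L)
          ((P' k * S k ^ n - ((n:ℝ) * ((T' k * P k) * S k ^ (n-1)))) / S k ^ (n+n)) k :=
        hd.congr_of_eventuallyEq heq
      exact ⟨by rw [iteratedDeriv_succ]; exact hd2.deriv, hd2⟩
  
  have hLder : ∀ j, ∀ k ∈ Set.Ioi (0:ℝ), HasDerivAt (iteratedDeriv j L) (iteratedDeriv (j+1) L k) k := by
    intro j k hk
    obtain ⟨P, n, _, hP⟩ := master j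
    rw [(hP k hk).1]
    exact (hP k hk).2
  have hLd0 : ∀ j, Tendsto (iteratedDeriv (j+1) L) (𝓝[>] (0:ℝ)) (𝓝 0) := by
    intro j
    obtain ⟨P, n, hPflat, hP⟩ := master j
    have h1 : Tendsto (fun k => P k / S k ^ n) (𝓝[>] (0:ℝ)) (𝓝 ((0:ℝ) / (lam:ℝ)^n)) :=
      hPflat.tendsto.div (hSlim.pow n) (pow_ne_zero n (ne_of_gt hlamR))
    rw [zero_div] at h1
    exact Filter.Tendsto.congr'
      (eventuallyEq_of_mem self_mem_nhdsWithin (fun k hk => ((hP k hk).1).symm)) h1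
  have hkLd0 : ∀ j, Tendsto (fun k => k * iteratedDeriv (j+1) L k) (𝓝[>] (0:ℝ)) (𝓝 0) := by
    intro j
    obtain ⟨P, n, hPflat, hP⟩ := master j
    have h1 : Tendsto (fun k => (k * P k) / S k ^ n) (𝓝[>] (0:ℝ)) (𝓝 ((0:ℝ) / (lam:ℝ)^n)) :=
      (hPflat.id_mul).tendsto.div (hSlim.pow n) (pow_ne_zero n (ne_of_gt hlamR))
    rw [zero_div] at h1
    refine Filter.Tendsto.congr'
      (eventuallyEq_of_mem self_mem_nhdsWithin (fun k hk => ?_)) h1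
    rw [(hP k hk).1, mul_div_assoc]
  set G : ℝ → ℝ := fun k => -M - k * L k with hGdef
  have hFG : Set.EqOn Fl G (Set.Ioi 0) := by
    intro k hk
    have hk0 : k ≠ 0 := ne_of_gt hk
    have hZ : (∑ α : Fin N, Real.exp (g α / k)) = Real.exp (M / k) * S k := by
      rw [hSdef, Finset.mul_sum]
      refine Finset.sum_congr rfl (fun α _ => ?_)
      rw [← Real.exp_add]
      congr 1
      field_simp
      ring
    show -k * Real.log (∑ α : Fin N, Real.exp (g α / k)) = -M - k * L k
    rw [hZ, Real.log_mul (Real.exp_ne_zero _) (ne_of_gt (hSpos k)), Real.log_exp, hLdef]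
    field_simp
    ring
  have masterG : ∀ j : ℕ, ∀ k ∈ Set.Ioi (0:ℝ),
      iteratedDeriv (j+1) G k = -(((j:ℝ)+1) * iteratedDeriv j L k + k * iteratedDeriv (j+1) L k) ∧
      HasDerivAt (iteratedDeriv j G)
        (-(((j:ℝ)+1) * iteratedDeriv j L k + k * iteratedDeriv (j+1) L k)) k := by
    intro j
    induction j with
    | zero =>
      intro k hk
      have hL0 : HasDerivAt L (iteratedDeriv 1 L k) k := by
        have h := hLder 0 k hk; rwa [iteratedDeriv_zero] at h
      have h1 := (hasDerivAt_id k).mul hL0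
      have hd : HasDerivAt G (-((1:ℝ) * L k + k * iteratedDeriv 1 L k)) k := by
        rw [hGdef]
        exact HasDerivAt.const_sub (-M) h1
      have hval : -((1:ℝ) * L k + k * iteratedDeriv 1 L k)
          = -((((0:ℕ):ℝ)+1) * iteratedDeriv 0 L k + k * iteratedDeriv (0+1) L k) := by
        rw [iteratedDeriv_zero]; norm_num
      constructor
      · show iteratedDeriv 1 G k = _
        rw [iteratedDeriv_one, hd.deriv, hval]
      · show HasDerivAt (iteratedDeriv 0 G) _ k
        rw [iteratedDeriv_zero, ← hval]
        exact hd
    | succ j ih =>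
      intro k hk
      have hEq : ∀ y ∈ Set.Ioi (0:ℝ), iteratedDeriv (j+1) G y
          = -(((j:ℝ)+1) * iteratedDeriv j L y + y * iteratedDeriv (j+1) L y) :=
        fun y hy => (ih y hy).1
      have hde : HasDerivAt
          (fun y => -(((j:ℝ)+1) * iteratedDeriv j L y + y * iteratedDeriv (j+1) L y))
          (-((((j+1:ℕ):ℝ)+1) * iteratedDeriv (j+1) L k + k * iteratedDeriv (j+1+1) L k)) k := by
        have h1 := (hLder j k hk).const_mul ((j:ℝ)+1)
        have h2 := (hasDerivAt_id k).mul (hLder (j+1) k hk)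
        have h3 := (h1.add h2).neg
        exact h3.congr_deriv (by simp only [id_eq]; push_cast; ring)
      have hd2 : HasDerivAt (iteratedDeriv (j+1) G)
          (-((((j+1:ℕ):ℝ)+1) * iteratedDeriv (j+1) L k + k * iteratedDeriv (j+1+1) L k)) k :=
        hde.congr_of_eventuallyEq (eventually_of_mem (isOpen_Ioi.mem_nhds hk) hEq)
      exact ⟨by rw [iteratedDeriv_succ]; exact hd2.deriv, hd2⟩
  have iter_eqon : ∀ m : ℕ, Set.EqOn (iteratedDeriv m Fl) (iteratedDeriv m G) (Set.Ioi 0) := by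
    intro m
    induction m with
    | zero => simpa [iteratedDeriv_zero] using hFG
    | succ m ih =>
      intro k hk
      rw [iteratedDeriv_succ, iteratedDeriv_succ]
      exact Filter.EventuallyEq.deriv_eq (eventually_of_mem (isOpen_Ioi.mem_nhds hk) ih)
  refine ⟨?_, ?_, ?_⟩
  · have hkk : Tendsto (fun k : ℝ => k) (𝓝[>] (0:ℝ)) (𝓝 0) :=
      tendsto_id.mono_right nhdsWithin_le_nhds
    have h2 := hkk.mul hLlim
    rw [zero_mul] at h2
    have h3 := (tendsto_const_nhds (x := -M) (f := 𝓝[>] (0:ℝ))).sub h2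
    rw [sub_zero] at h3
    exact Filter.Tendsto.congr'
      (eventuallyEq_of_mem self_mem_nhdsWithin (fun k hk => ((hFG hk).symm : G k = Fl k))) h3
  · have h1 : ∀ k ∈ Set.Ioi (0:ℝ), deriv Fl k = -((1:ℝ) * L k + k * iteratedDeriv 1 L k) := by
      intro k hk
      have ha : deriv Fl k = iteratedDeriv 1 G k := by
        rw [← iteratedDeriv_one]; exact iter_eqon 1 hk
      rw [ha, (masterG 0 k hk).1, iteratedDeriv_zero]
      norm_num
    have hlim : Tendsto (fun k => -((1:ℝ) * L k + k * iteratedDeriv 1 L k)) (𝓝[>] (0:ℝ))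
        (𝓝 (-Real.log lam)) := by
      have := ((hLlim.const_mul (1:ℝ)).add (hkLd0 0)).neg
      simpa using this
    exact Filter.Tendsto.congr'
      (eventuallyEq_of_mem self_mem_nhdsWithin (fun k hk => (h1 k hk).symm)) hlim
  · intro m hm
    obtain ⟨j, rfl⟩ : ∃ j, m = j + 2 := ⟨m - 2, by omega⟩
    have h1 : ∀ k ∈ Set.Ioi (0:ℝ), iteratedDeriv (j+2) Fl k =
        -(((j:ℝ)+2) * iteratedDeriv (j+1) L k + k * iteratedDeriv (j+2) L k) := by
      intro k hk
      rw [iter_eqon (j+2) hk]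
      have := (masterG (j+1) k hk).1
      rw [this]
      push_cast
      ring_nf
    have hlim : Tendsto
        (fun k => -(((j:ℝ)+2) * iteratedDeriv (j+1) L k + k * iteratedDeriv (j+2) L k))
        (𝓝[>] (0:ℝ)) (𝓝 0) := by
      have := (((hLd0 j).const_mul ((j:ℝ)+2)).add (hkLd0 (j+1))).neg
      simpa using this
    exact Filter.Tendsto.congr'
      (eventuallyEq_of_mem self_mem_nhdsWithin (fun k hk => (h1 k hk).symm)) hlim

end TropAux

open Filter Topology

/-- For `Z(k,x) = Σ_α exp(f_α(x)/k)` and `F(k,x) = -k·log Z(k,x)`, with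
`κ₀(x) = min_α (-f_α(x))` attained by `lam₀(x)` indices: as `k → 0⁺`, `F` tends to
`κ₀`, its first `k`-derivative tends to `-log lam₀`, and every higher-order
`k`-derivative (order `m ≥ 2`) tends to `0`. -/
theorem tropical_free_energy_expansion
    {D : Type*} (N : ℕ) (hN : 0 < N) (f : Fin N → D → ℝ) (x : D) :
    let Z : ℝ → ℝ := fun k => ∑ α : Fin N, Real.exp (f α x / k)
    let F : ℝ → ℝ := fun k => -k * Real.log (Z k)
    let κ₀ : ℝ := sInf (Set.range fun α : Fin N => -(f α x))
    let lam₀ : ℕ := (Finset.univ.filter fun α : Fin N => -(f α x) = κ₀).card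
    Tendsto F (𝓝[>] (0 : ℝ)) (𝓝 κ₀) ∧
    Tendsto (deriv F) (𝓝[>] (0 : ℝ)) (𝓝 (-Real.log lam₀)) ∧
    (∀ m : ℕ, 2 ≤ m → Tendsto (iteratedDeriv m F) (𝓝[>] (0 : ℝ)) (𝓝 0)) := by
  intro Z F κ₀ lam₀
  have hfin : (Set.range fun α : Fin N => -(f α x)).Finite := Set.finite_range _
  have hne : (Set.range fun α : Fin N => -(f α x)).Nonempty := ⟨_, ⟨⟨0, hN⟩, rfl⟩⟩
  obtain ⟨α₀, hα₀⟩ : κ₀ ∈ Set.range fun α : Fin N => -(f α x) := hne.csInf_mem hfin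
  have hle : ∀ α : Fin N, f α x ≤ -κ₀ := by
    intro α
    have h := csInf_le hfin.bddBelow (Set.mem_range_self α)
    show f α x ≤ -κ₀
    linarith [h]
  have hmem : ∃ α : Fin N, f α x = -κ₀ := ⟨α₀, by have h : -f α₀ x = κ₀ := hα₀; linarith⟩
  have hkey := TropAux.key N (fun α => f α x) (-κ₀) hle hmem
  have hcard : (Finset.univ.filter fun α : Fin N => (fun α => f α x) α = -κ₀)
      = (Finset.univ.filter fun α : Fin N => -(f α x) = κ₀) := by
    ext α
    simp [neg_eq_iff_eq_neg]
  rw [hcard, neg_neg] at hkey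
  exact hkey
end
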